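/- Let M_1, M_2 ∈ M_n(ℂ) be skewsymmetric matrices. If for every symmetric fluctuation f^T (a finite family of real coefficients r_j and unitaries u_j ∈ U(n)) the condition Σ_j r_j u_j M_1 u_jᵀ = 0 implies Σ_j r_j u_j M_2 u_jᵀ = 0, then M_2 = c M_1 for some complex constant c. -/

import Mathlib

open Matrix

namespace SC
variable {n : ℕ}

def gp (d : Fin n → ℂ) (σ : Equiv.Perm (Fin n)) : Matrix (Fin n) (Fin n) ℂ :=
  Matrix.of fun i j => if σ j = i then d i else 0

lemma gp_mem (d : Fin n → ℂ) (σ : Equiv.Perm (Fin n))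
    (hd : ∀ i, d i * (starRingEnd ℂ) (d i) = 1) :
    gp d σ ∈ Matrix.unitaryGroup (Fin n) ℂ := by
  rw [Matrix.mem_unitaryGroup_iff]
  ext i j
  rw [Matrix.mul_apply]
  rw [show (star (gp d σ) : Matrix (Fin n) (Fin n) ℂ) = (gp d σ)ᴴ from rfl]
  simp only [Matrix.conjTranspose_apply, gp, Matrix.of_apply]
  rw [Finset.sum_eq_single (σ.symm i)]
  · by_cases hij : i = j
    · subst hij
      simp [hd i]
    · have hji : ¬ (σ (σ.symm i) = j) := by
        simpa using fun h : i = j => hij h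
      simp [Matrix.one_apply, hij, hji]
  · intro k _ hk
    have : σ k ≠ i := fun h => hk (by simp [← h])
    simp [this]
  · simp

lemma gp_conj (d : Fin n → ℂ) (σ : Equiv.Perm (Fin n))
    (M : Matrix (Fin n) (Fin n) ℂ) :
    gp d σ * M * (gp d σ)ᵀ =
      Matrix.of fun i j => d i * d j * M (σ.symm i) (σ.symm j) := by
  ext i j
  rw [Matrix.mul_apply]
  have h1 : ∀ l, (gp d σ * M) i l = d i * M (σ.symm i) l := by
    intro l
    rw [Matrix.mul_apply]
    rw [Finset.sum_eq_single (σ.symm i)]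
    · simp [gp]
    · intro k _ hk
      have : σ k ≠ i := fun h => hk (by simp [← h])
      simp [gp, this]
    · simp
  simp only [h1, Matrix.transpose_apply]
  rw [Finset.sum_eq_single (σ.symm j)]
  · simp [gp, Matrix.of_apply]; ring
  · intro k _ hk
    have : σ k ≠ j := fun h => hk (by simp [← h])
    simp [gp, this]
  · simp

def sg (s : Bool) : ℝ := if s then 1 else -1
def sgc (s : Bool) : ℂ := if s then 1 else -1

def Dd (a b : Fin n) (l : ℂ) (s t : Bool) : Fin n → ℂ := fun i =>
  if i = a then sgc s * l else if i = b then sgc t else sgc s * sgc t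

lemma Dd_unit (a b : Fin n) (l : ℂ) (hl : l * (starRingEnd ℂ) l = 1) (s t : Bool) :
    ∀ i, Dd a b l s t i * (starRingEnd ℂ) (Dd a b l s t i) = 1 := by
  intro i
  unfold Dd
  split_ifs <;> cases s <;> cases t <;>
    simp [sgc, _root_.map_mul] <;> linear_combination hl

lemma phase (z : ℂ) : ∃ t : ℝ, ∃ l : ℂ,
    l * (starRingEnd ℂ) l = 1 ∧ (t : ℂ) * l = z := by
  by_cases hz : z = 0
  · exact ⟨0, 1, by simp, by simp [hz]⟩
  · refine ⟨‖z‖, z / ‖z‖, ?_, ?_⟩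
    · have habs : (‖z‖ : ℂ) ≠ 0 := by
        simpa [Complex.ofReal_eq_zero] using hz
      rw [map_div₀, Complex.conj_ofReal, div_mul_div_comm, Complex.mul_conj,
        Complex.normSq_eq_norm_sq]
      push_cast
      field_simp
    · have habs : (‖z‖ : ℂ) ≠ 0 := by
        simpa [Complex.ofReal_eq_zero] using hz
      field_simp


lemma perm_exists (a b c d : Fin n) (hab : a ≠ b) (hcd : c ≠ d) :
    ∃ σ : Equiv.Perm (Fin n), σ.symm a = c ∧ σ.symm b = d := by
  classical
  set e₁ := Equiv.swap c a with he₁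
  set e₂ := Equiv.swap (e₁ d) b with he₂
  refine ⟨e₁.trans e₂, ?_, ?_⟩
  · rw [Equiv.symm_apply_eq]
    have h1 : e₁ c = a := Equiv.swap_apply_left c a
    have hda : e₁ d ≠ a := by
      intro h
      apply hcd
      have h2 := congrArg e₁ h
      rw [he₁, Equiv.swap_apply_self, Equiv.swap_apply_right] at h2
      exact h2.symm
    have h2 : e₂ a = a := Equiv.swap_apply_of_ne_of_ne (Ne.symm hda) hab
    simp [Equiv.trans_apply, h1, h2]
  · rw [Equiv.symm_apply_eq]
    have h2 : e₂ (e₁ d) = b := Equiv.swap_apply_left _ b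
    simp [Equiv.trans_apply, h2]

lemma core (M₁ M₂ : Matrix (Fin n) (Fin n) ℂ)
    (h₁ : M₁.transpose = -M₁)
    (h : ∀ (J : Type) (_ : Fintype J) (r : J → ℝ)
      (u : J → Matrix.unitaryGroup (Fin n) ℂ),
      (∑ j, r j • ((u j : Matrix (Fin n) (Fin n) ℂ) * M₁ *
          ((u j : Matrix (Fin n) (Fin n) ℂ)).transpose)) = 0 →
      (∑ j, r j • ((u j : Matrix (Fin n) (Fin n) ℂ) * M₂ *
          ((u j : Matrix (Fin n) (Fin n) ℂ)).transpose)) = 0)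
    (a b c d : Fin n) (hab : a ≠ b) (hcd : c ≠ d) (z w : ℂ)
    (hz : z * M₁ a b + w * M₁ c d = 0) :
    z * M₂ a b + w * M₂ c d = 0 := by
  classical
  obtain ⟨t0, l0, hl0, hzl⟩ := phase z
  obtain ⟨t1, l1, hl1, hwl⟩ := phase w
  obtain ⟨σ, hσa, hσb⟩ := perm_exists a b c d hab hcd
  have hskew : ∀ i j, M₁ j i = -M₁ i j := by
    intro i j
    have := congrFun (congrFun h₁ i) j
    simpa [Matrix.transpose_apply, Matrix.neg_apply] using this
  set r : Bool × Bool × Bool → ℝ :=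
    fun p => sg p.1 * sg p.2.1 * (if p.2.2 then t1 else t0) with hr
  set u : Bool × Bool × Bool → Matrix.unitaryGroup (Fin n) ℂ :=
    fun p => ⟨gp (Dd a b (if p.2.2 then l1 else l0) p.1 p.2.1)
        (if p.2.2 then σ else Equiv.refl (Fin n)),
      gp_mem _ _ (Dd_unit a b _ (by cases hk : p.2.2 <;> simp [hk, hl0, hl1]) p.1 p.2.1)⟩
      with hu
  have hsum : ∀ M : Matrix (Fin n) (Fin n) ℂ,
      (∑ p, r p • ((u p : Matrix (Fin n) (Fin n) ℂ) * M *
          ((u p : Matrix (Fin n) (Fin n) ℂ)).transpose)) =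
      Matrix.of fun i j =>
        if i = a ∧ j = b then (4:ℂ) * (z * M a b + w * M c d)
        else if i = b ∧ j = a then (4:ℂ) * (z * M b a + w * M d c)
        else 0 := by
    intro M
    ext i j
    simp only [hr, hu, Matrix.sum_apply, Matrix.smul_apply, gp_conj,
      Matrix.of_apply, Fintype.sum_prod_type, Fintype.sum_bool]
    by_cases hia : i = a <;> by_cases hib : i = b <;>
      by_cases hja : j = a <;> by_cases hjb : j = b
    all_goals (try (exact absurd (hia.symm.trans hib) hab))
    all_goals (try (exact absurd (hja.symm.trans hjb) hab))
    all_goals (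
      simp only [hia, hib, hja, hjb, if_true, if_false, eq_self_iff_true,
        Dd, sg, sgc, Equiv.refl_symm, Equiv.coe_refl, Equiv.refl_apply, Equiv.Perm.one_symm, Equiv.Perm.coe_one, id_eq, hσa, hσb, hab, Ne.symm hab, true_and, and_true, and_false, false_and] )
    all_goals (simp only [Equiv.refl_symm, Equiv.coe_refl, Equiv.refl_apply, Equiv.Perm.one_symm, Equiv.Perm.coe_one, id_eq, hσa, hσb, Complex.real_smul]; push_cast)
    all_goals (try ring1)
    all_goals (simp only [Equiv.refl_symm, Equiv.refl_apply, Equiv.coe_refl, id_eq])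
    all_goals (first
      | linear_combination (4*(M a b))*hzl + (4*(M c d))*hwl
      | linear_combination (4*(M b a))*hzl + (4*(M d c))*hwl)
  have hM₁ : (∑ p, r p • ((u p : Matrix (Fin n) (Fin n) ℂ) * M₁ *
      ((u p : Matrix (Fin n) (Fin n) ℂ)).transpose)) = 0 := by
    rw [hsum]
    ext i j
    simp only [Matrix.of_apply, Matrix.zero_apply]
    split_ifs with hab' hba'
    · rw [hz]; ring
    · rw [hskew a b, hskew c d]
      linear_combination (-4 : ℂ) * hz
    · rfl
  have hM₂ := h _ inferInstance r u hM₁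
  rw [hsum] at hM₂
  have := congrFun (congrFun hM₂ a) b
  simp only [Matrix.of_apply, Matrix.zero_apply, if_pos (⟨rfl, rfl⟩ : a = a ∧ b = b)] at this
  have h4 : (4:ℂ) ≠ 0 := by norm_num
  exact (mul_eq_zero.mp this).resolve_left h4


lemma diag_zero (M : Matrix (Fin n) (Fin n) ℂ) (hM : M.transpose = -M) (i : Fin n) :
    M i i = 0 := by
  have := congrFun (congrFun hM i) i
  simp only [Matrix.transpose_apply, Matrix.neg_apply] at this
  linear_combination this / 2

end SC

/-- If every symmetric fluctuation annihilating the skewsymmetric matrix `M₁` also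
annihilates the skewsymmetric matrix `M₂`, then `M₂` is ℂ-colinear to `M₁`. -/
theorem skew_colinear_of_symmetric_fluctuations (n : ℕ)
    (M₁ M₂ : Matrix (Fin n) (Fin n) ℂ)
    (h₁ : M₁.transpose = -M₁) (h₂ : M₂.transpose = -M₂)
    (h : ∀ (J : Type) (_ : Fintype J) (r : J → ℝ)
      (u : J → Matrix.unitaryGroup (Fin n) ℂ),
      (∑ j, r j • ((u j : Matrix (Fin n) (Fin n) ℂ) * M₁ *
          ((u j : Matrix (Fin n) (Fin n) ℂ)).transpose)) = 0 →
      (∑ j, r j • ((u j : Matrix (Fin n) (Fin n) ℂ) * M₂ *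
          ((u j : Matrix (Fin n) (Fin n) ℂ)).transpose)) = 0) :
    ∃ c : ℂ, M₂ = c • M₁ := by
  classical
  by_cases hM1 : M₁ = 0
  · refine ⟨0, ?_⟩
    ext i j
    by_cases hij : i = j
    · subst hij; simp [SC.diag_zero M₂ h₂ i]
    · have := SC.core M₁ M₂ h₁ h i j j i hij (fun hji => hij hji.symm) 1 0
        (by simp [hM1])
      simpa using this
  · obtain ⟨p, hp⟩ : ∃ p, ∃ q, M₁ p q ≠ 0 := by
      by_contra hc
      push_neg at hc
      exact hM1 (by ext i j; simpa using hc i j)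
    obtain ⟨q, hpq⟩ := hp
    have hpqne : p ≠ q := fun hpq' => hpq (hpq' ▸ SC.diag_zero M₁ h₁ p)
    refine ⟨M₂ p q / M₁ p q, ?_⟩
    ext i j
    simp only [Matrix.smul_apply, smul_eq_mul]
    by_cases hij : i = j
    · subst hij; simp [SC.diag_zero M₂ h₂ i, SC.diag_zero M₁ h₁ i]
    · have hcore := SC.core M₁ M₂ h₁ h i j p q hij hpqne (M₁ p q) (-(M₁ i j))
        (by ring)
      field_simp
      linear_combination hcore
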